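/- arXiv:1301.7714 — 3 statements merged into one kernel-verified Lean document; each statement's English description precedes it below -/
import Mathlib

section
/- For all integers n ≥ 2, 0 ≤ k ≤ n−2 and 0 ≤ r ≤ n−1, one has M(n,k,r,r+1) = M(n−1,k,r,r+1) + M(n−1,k,r−1,r+1) + N(n−1,k−1,r) + M(n−1,k,r−1,r), where N(n−1,−1,r) is interpreted as 0 when k = 0. -/
/-- The x-coordinate (number of East steps) of the lattice path `P` after `m` steps. -/
def latticePos {n : ℕ} (P : Fin n → Bool) (m : ℕ) : ℕ :=
  (Finset.univ.filter (fun i : Fin n => (i : ℕ) < m ∧ P i = true)).card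

/-- The number of intersections of paths `P` and `Q` (common lattice points with
coordinate sum strictly between `0` and `n`). -/
def latticeInter {n : ℕ} (P Q : Fin n → Bool) : ℕ :=
  ((Finset.Ioo 0 n).filter (fun m => latticePos P m = latticePos Q m)).card

/-- Number of ordered pairs of lattice paths of length `n`, ending at `(r, n-r)` and
`(s, n-s)` respectively, intersecting exactly `k` times (natural-number version). -/
def Mnat (n k r s : ℕ) : ℕ :=
  (Finset.univ.filter (fun PQ : (Fin n → Bool) × (Fin n → Bool) =>
      latticePos PQ.1 n = r ∧ latticePos PQ.2 n = s ∧ latticeInter PQ.1 PQ.2 = k)).card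

/-- `M n k r s`, extended by zero to integer arguments. -/
def M (n k r s : ℤ) : ℤ :=
  if 0 ≤ n ∧ 0 ≤ k ∧ 0 ≤ r ∧ 0 ≤ s then Mnat n.toNat k.toNat r.toNat s.toNat else 0

/-- `N n k r = M n k r r`. -/
def N (n k r : ℤ) : ℤ := M n k r r

/-- `NE n k p = Σ_{r+s=2p, 0 ≤ r,s ≤ n} M n k r s`. -/
noncomputable def NE (n k p : ℤ) : ℤ := ∑ r ∈ Finset.Icc (0 : ℤ) n, M n k r (2 * p - r)

/-- `NO n k p = Σ_{r+s=2p+1, 0 ≤ r,s ≤ n} M n k r s`. -/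
noncomputable def NO (n k p : ℤ) : ℤ := ∑ r ∈ Finset.Icc (0 : ℤ) n, M n k r (2 * p + 1 - r)

/-- Binomial coefficient for integer arguments (zero unless both are nonnegative). -/
def ichoose (a b : ℤ) : ℤ :=
  if 0 ≤ a ∧ 0 ≤ b then (a.toNat).choose b.toNat else 0


section MRecAux
open Finset


lemma latticePos_eq_sum {n : ℕ} (P : Fin n → Bool) (j : ℕ) :
    latticePos P j = ∑ i : Fin n, if (i : ℕ) < j ∧ P i = true then 1 else 0 := by
  rw [latticePos, Finset.card_filter]

lemma latticePos_init {m : ℕ} (P : Fin (m+1) → Bool) (j : ℕ) (hj : j ≤ m) :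
    latticePos (Fin.init P) j = latticePos P j := by
  rw [latticePos_eq_sum, latticePos_eq_sum, Fin.sum_univ_castSucc]
  simp only [Fin.coe_castSucc, Fin.val_last]
  have h : ¬ (m < j ∧ P (Fin.last m) = true) := fun ⟨h1, _⟩ => by omega
  rw [if_neg h, add_zero]
  apply Finset.sum_congr rfl
  intro i _
  simp [Fin.init]
  rfl

lemma latticePos_succ {m : ℕ} (P : Fin (m+1) → Bool) :
    latticePos P (m+1) = latticePos (Fin.init P) m + (if P (Fin.last m) then 1 else 0) := by
  rw [latticePos_eq_sum, latticePos_eq_sum, Fin.sum_univ_castSucc]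
  simp only [Fin.coe_castSucc, Fin.val_last]
  congr 1
  · apply Finset.sum_congr rfl
    intro i _
    have h1 : (i : ℕ) < m + 1 := by omega
    have h2 : (i : ℕ) < m := i.is_lt
    simp [h1, h2, Fin.init]
  · simp

lemma latticeInter_succ {m : ℕ} (hm : 1 ≤ m) (P Q : Fin (m+1) → Bool) :
    latticeInter P Q = latticeInter (Fin.init P) (Fin.init Q)
      + (if latticePos (Fin.init P) m = latticePos (Fin.init Q) m then 1 else 0) := by
  rw [latticeInter, latticeInter]
  have hIoo : Finset.Ioo 0 (m+1) = insert m (Finset.Ioo 0 m) := by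
    ext x; simp; omega
  have hnm : m ∉ Finset.Ioo 0 m := by simp
  rw [hIoo, Finset.filter_insert]
  have hcongr : Finset.filter (fun j => latticePos P j = latticePos Q j) (Finset.Ioo 0 m)
      = Finset.filter (fun j => latticePos (Fin.init P) j = latticePos (Fin.init Q) j) (Finset.Ioo 0 m) := by
    apply Finset.filter_congr
    intro j hj
    simp only [Finset.mem_Ioo] at hj
    rw [latticePos_init P j (by omega), latticePos_init Q j (by omega)]
  have hiff : (latticePos P m = latticePos Q m) ↔
      (latticePos (Fin.init P) m = latticePos (Fin.init Q) m) := by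
    rw [latticePos_init P m le_rfl, latticePos_init Q m le_rfl]
  by_cases h : latticePos (Fin.init P) m = latticePos (Fin.init Q) m
  · rw [if_pos (hiff.mpr h), if_pos h, hcongr,
      Finset.card_insert_of_notMem (fun hmem => hnm (Finset.mem_of_mem_filter _ hmem))]
  · rw [if_neg (fun hh => h (hiff.mp hh)), if_neg h, hcongr, add_zero]


def Mcnt (m : ℕ) (k r s : ℤ) : ℕ :=
  (Finset.univ.filter (fun PQ : (Fin m → Bool) × (Fin m → Bool) =>
    (latticePos PQ.1 m : ℤ) = r ∧ (latticePos PQ.2 m : ℤ) = s ∧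
    (latticeInter PQ.1 PQ.2 : ℤ) = k)).card

def Aux (m : ℕ) (k r s : ℤ) (b c : Bool) : ℕ :=
  (Finset.univ.filter (fun PQ : (Fin m → Bool) × (Fin m → Bool) =>
    ((latticePos PQ.1 m : ℤ) + (if b then 1 else 0)) = r ∧
    ((latticePos PQ.2 m : ℤ) + (if c then 1 else 0)) = s ∧
    ((latticeInter PQ.1 PQ.2 : ℤ) +
      (if latticePos PQ.1 m = latticePos PQ.2 m then 1 else 0)) = k)).card

lemma Mcnt_split (m : ℕ) (hm : 1 ≤ m) (k r s : ℤ) :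
    Mcnt (m+1) k r s = Aux m k r s true true + Aux m k r s true false
      + Aux m k r s false true + Aux m k r s false false := by
  have key : Mcnt (m+1) k r s =
      (Finset.univ.filter (fun x : ((Fin m → Bool) × (Fin m → Bool)) × (Bool × Bool) =>
        ((latticePos x.1.1 m : ℤ) + (if x.2.1 then 1 else 0)) = r ∧
        ((latticePos x.1.2 m : ℤ) + (if x.2.2 then 1 else 0)) = s ∧
        ((latticeInter x.1.1 x.1.2 : ℤ) +
          (if latticePos x.1.1 m = latticePos x.1.2 m then 1 else 0)) = k)).card := by
    unfold Mcnt
    refine Finset.card_bij'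
      (i := fun PQ _ => ((Fin.init PQ.1, Fin.init PQ.2), (PQ.1 (Fin.last m), PQ.2 (Fin.last m))))
      (j := fun x _ => (Fin.snoc x.1.1 x.2.1, Fin.snoc x.1.2 x.2.2)) ?hi ?hj ?li ?ri
    case hi =>
      intro PQ hPQ
      simp only [Finset.mem_filter, Finset.mem_univ, true_and] at hPQ ⊢
      rw [latticePos_succ PQ.1, latticePos_succ PQ.2, latticeInter_succ hm PQ.1 PQ.2] at hPQ
      obtain ⟨h1, h2, h3⟩ := hPQ
      refine ⟨?_, ?_, ?_⟩ <;> push_cast [← h1, ← h2, ← h3] <;> split <;> simp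
    case hj =>
      intro x hx
      simp only [Finset.mem_filter, Finset.mem_univ, true_and] at hx ⊢
      rw [latticePos_succ, latticePos_succ, latticeInter_succ hm]
      simp only [Fin.init_snoc, Fin.snoc_last]
      obtain ⟨h1, h2, h3⟩ := hx
      refine ⟨?_, ?_, ?_⟩ <;> push_cast [← h1, ← h2, ← h3] <;> split <;> simp
    case li =>
      intro PQ _
      simp [Fin.snoc_init_self]
    case ri =>
      intro x _
      simp [Fin.init_snoc, Fin.snoc_last]
  rw [key, Finset.card_filter]
  unfold Aux
  simp only [Finset.card_filter, Fintype.sum_prod_type, Fintype.sum_bool,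
    Finset.sum_add_distrib]
  norm_num
  ring

lemma Aux_ff (m : ℕ) (k r : ℤ) : Aux m k r (r+1) false false = Mcnt m k r (r+1) := by
  unfold Aux Mcnt
  congr 1
  apply Finset.filter_congr
  intro PQ _
  simp only [Bool.false_eq_true, if_false, add_zero]
  constructor
  · rintro ⟨h1, h2, h3⟩
    have hne : latticePos PQ.1 m ≠ latticePos PQ.2 m := fun he => by rw [he] at h1; omega
    rw [if_neg hne] at h3
    exact ⟨h1, h2, by omega⟩
  · rintro ⟨h1, h2, h3⟩
    have hne : latticePos PQ.1 m ≠ latticePos PQ.2 m := fun he => by rw [he] at h1; omega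
    rw [if_neg hne]
    exact ⟨h1, h2, by omega⟩

lemma Aux_ft (m : ℕ) (k r : ℤ) : Aux m k r (r+1) false true = Mcnt m (k-1) r r := by
  unfold Aux Mcnt
  congr 1
  apply Finset.filter_congr
  intro PQ _
  simp only [if_true, Bool.false_eq_true, if_false, add_zero]
  constructor
  · rintro ⟨h1, h2, h3⟩
    have heq : latticePos PQ.1 m = latticePos PQ.2 m := by omega
    rw [if_pos heq] at h3
    exact ⟨h1, by omega, by omega⟩
  · rintro ⟨h1, h2, h3⟩
    have heq : latticePos PQ.1 m = latticePos PQ.2 m := by omega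
    rw [if_pos heq]
    exact ⟨h1, by omega, by omega⟩

lemma Aux_tf (m : ℕ) (k r : ℤ) : Aux m k r (r+1) true false = Mcnt m k (r-1) (r+1) := by
  unfold Aux Mcnt
  congr 1
  apply Finset.filter_congr
  intro PQ _
  simp only [if_true, Bool.false_eq_true, if_false, add_zero]
  constructor
  · rintro ⟨h1, h2, h3⟩
    have hne : latticePos PQ.1 m ≠ latticePos PQ.2 m := fun he => by rw [he] at h1; omega
    rw [if_neg hne] at h3
    exact ⟨by omega, h2, by omega⟩
  · rintro ⟨h1, h2, h3⟩
    have hne : latticePos PQ.1 m ≠ latticePos PQ.2 m := fun he => by rw [he] at h1; omega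
    rw [if_neg hne]
    exact ⟨by omega, h2, by omega⟩

lemma Aux_tt (m : ℕ) (k r : ℤ) : Aux m k r (r+1) true true = Mcnt m k (r-1) r := by
  unfold Aux Mcnt
  congr 1
  apply Finset.filter_congr
  intro PQ _
  simp only [if_true]
  constructor
  · rintro ⟨h1, h2, h3⟩
    have hne : latticePos PQ.1 m ≠ latticePos PQ.2 m := fun he => by rw [he] at h1; omega
    rw [if_neg hne] at h3
    exact ⟨by omega, by omega, by omega⟩
  · rintro ⟨h1, h2, h3⟩
    have hne : latticePos PQ.1 m ≠ latticePos PQ.2 m := fun he => by rw [he] at h1; omega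
    rw [if_neg hne]
    exact ⟨by omega, by omega, by omega⟩

lemma M_eq_Mcnt (n k r s : ℤ) (hn : 0 ≤ n) : M n k r s = (Mcnt n.toNat k r s : ℤ) := by
  unfold M Mcnt
  by_cases h : 0 ≤ k ∧ 0 ≤ r ∧ 0 ≤ s
  · rw [if_pos ⟨hn, h⟩]
    unfold Mnat
    congr 2
    apply Finset.filter_congr
    intro PQ _
    constructor
    · rintro ⟨h1, h2, h3⟩
      refine ⟨by omega, by omega, by omega⟩
    · rintro ⟨h1, h2, h3⟩
      refine ⟨by omega, by omega, by omega⟩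
  · rw [if_neg (fun hh => h ⟨hh.2.1, hh.2.2⟩)]
    symm
    rw [Nat.cast_eq_zero, Finset.card_eq_zero, Finset.filter_eq_empty_iff]
    intro PQ _
    rintro ⟨h1, h2, h3⟩
    exact h ⟨by omega, by omega, by omega⟩

end MRecAux

/-- The recurrence for `M(n,k,r,r+1)` (adjacent endpoints); here `N(n−1,−1,r) = 0`
when `k = 0`. -/
theorem M_recurrence_adjacent (n k r : ℤ) (hn : 2 ≤ n) (hk : 0 ≤ k) (hkn : k ≤ n - 2)
    (hr : 0 ≤ r) (hrn : r ≤ n - 1) :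
    M n k r (r + 1) =
      M (n - 1) k r (r + 1) + M (n - 1) k (r - 1) (r + 1) + N (n - 1) (k - 1) r +
        M (n - 1) k (r - 1) r := by
  have hm : 1 ≤ (n - 1).toNat := by omega
  have h1 : n.toNat = (n - 1).toNat + 1 := by omega
  rw [N, M_eq_Mcnt n k r (r + 1) (by omega), M_eq_Mcnt (n - 1) k r (r + 1) (by omega),
    M_eq_Mcnt (n - 1) k (r - 1) (r + 1) (by omega), M_eq_Mcnt (n - 1) (k - 1) r r (by omega),
    M_eq_Mcnt (n - 1) k (r - 1) r (by omega), h1, Mcnt_split _ hm, Aux_tt, Aux_tf, Aux_ft, Aux_ff]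
  push_cast
  ring
end

section
/- For all integers n ≥ 2, 0 ≤ k ≤ n−2 and p ≥ 0, the following identity holds in ℤ: NO(n,k,p) = NO(n−1,k,p) + 2·NE(n−1,k,p) + 2·N(n−1,k−1,p) − 2·N(n−1,k,p) + NO(n−1,k,p−1), where N(n−1,−1,p) = 0 and NO(n−1,k,−1) = 0. -/
lemma latticePos_le {n : ℕ} (P : Fin n → Bool) (m : ℕ) : latticePos P m ≤ n := by
  classical
  calc (Finset.univ.filter (fun i : Fin n => (i : ℕ) < m ∧ P i = true)).card
      ≤ (Finset.univ : Finset (Fin n)).card := Finset.card_filter_le _ _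
    _ = n := by simp

lemma Mnat_eq_zero {n k r s : ℕ} (h : n < r ∨ n < s) : Mnat n k r s = 0 := by
  rw [Mnat, Finset.card_eq_zero, Finset.filter_eq_empty_iff]
  rintro PQ - ⟨h1, h2, -⟩
  have := latticePos_le PQ.1 n
  have := latticePos_le PQ.2 n
  omega

lemma latticePos_snoc_of_le {n : ℕ} (P : Fin n → Bool) (b : Bool) {m : ℕ} (hm : m ≤ n) :
    latticePos (Fin.snoc P b) m = latticePos P m := by
  rw [latticePos, latticePos, Finset.card_filter, Finset.card_filter,
    Fin.sum_univ_castSucc]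
  simp only [Fin.snoc_castSucc, Fin.coe_castSucc, Fin.val_last, Fin.snoc_last]
  rw [if_neg (by omega : ¬(n < m ∧ b = true)), add_zero]

lemma latticePos_snoc_top {n : ℕ} (P : Fin n → Bool) (b : Bool) :
    latticePos (Fin.snoc P b) (n + 1) = latticePos P n + (if b then 1 else 0) := by
  rw [latticePos, latticePos, Finset.card_filter, Finset.card_filter,
    Fin.sum_univ_castSucc]
  simp only [Fin.snoc_castSucc, Fin.coe_castSucc, Fin.val_last, Fin.snoc_last]
  congr 1
  · refine Finset.sum_congr rfl fun i _ => ?_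
    have h1 : (i : ℕ) < n + 1 := Nat.lt_succ_of_lt i.isLt
    simp [h1, i.isLt]
  · simp

lemma latticeInter_snoc {n : ℕ} (hn : 1 ≤ n) (P Q : Fin n → Bool) (b c : Bool) :
    latticeInter (Fin.snoc P b) (Fin.snoc Q c) =
      latticeInter P Q + (if latticePos P n = latticePos Q n then 1 else 0) := by
  rw [latticeInter, latticeInter]
  have hIoo : Finset.Ioo 0 (n + 1) = insert n (Finset.Ioo 0 n) := by
    ext x; simp only [Finset.mem_Ioo, Finset.mem_insert]; omega
  have hfeq : Finset.filter (fun m => latticePos (Fin.snoc P b) m = latticePos (Fin.snoc Q c) m)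
      (Finset.Ioo 0 n) = Finset.filter (fun m => latticePos P m = latticePos Q m)
      (Finset.Ioo 0 n) := by
    refine Finset.filter_congr fun m hm => ?_
    rw [Finset.mem_Ioo] at hm
    rw [latticePos_snoc_of_le P b (by omega), latticePos_snoc_of_le Q c (by omega)]
  rw [hIoo, Finset.filter_insert, latticePos_snoc_of_le P b le_rfl,
    latticePos_snoc_of_le Q c le_rfl, hfeq]
  by_cases h : latticePos P n = latticePos Q n
  · rw [if_pos h, if_pos h, Finset.card_insert_of_notMem (fun hmem => by
      simpa using Finset.mem_of_mem_filter _ hmem)]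
  · rw [if_neg h, if_neg h, add_zero]

lemma master (n : ℕ) (hn : 1 ≤ n) (k r s : ℕ) :
    Mnat (n + 1) k r s =
      ∑ b : Bool, ∑ c : Bool,
        (Finset.univ.filter (fun PQ : (Fin n → Bool) × (Fin n → Bool) =>
          latticePos PQ.1 n + (if b then 1 else 0) = r ∧
          latticePos PQ.2 n + (if c then 1 else 0) = s ∧
          latticeInter PQ.1 PQ.2 +
            (if latticePos PQ.1 n = latticePos PQ.2 n then 1 else 0) = k)).card := by
  classical
  have he : ∀ (b : Bool) (P : Fin n → Bool),
      (Fin.snocEquiv (fun _ => Bool)) (b, P) = Fin.snoc P b := fun b P => rfl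
  calc Mnat (n + 1) k r s
      = ∑ x : (Bool × (Fin n → Bool)) × (Bool × (Fin n → Bool)),
          if (latticePos (Fin.snoc x.1.2 x.1.1) (n + 1) = r ∧
              latticePos (Fin.snoc x.2.2 x.2.1) (n + 1) = s ∧
              latticeInter (Fin.snoc x.1.2 x.1.1) (Fin.snoc x.2.2 x.2.1) = k)
            then 1 else 0 := by
        rw [Mnat, Finset.card_filter]
        rw [← Equiv.sum_comp (Equiv.prodCongr (Fin.snocEquiv (fun _ => Bool))
          (Fin.snocEquiv (fun _ => Bool)))
          (fun PQ : (Fin (n + 1) → Bool) × (Fin (n + 1) → Bool) =>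
            if (latticePos PQ.1 (n + 1) = r ∧ latticePos PQ.2 (n + 1) = s ∧
                latticeInter PQ.1 PQ.2 = k) then 1 else 0)]
        refine Finset.sum_congr rfl fun x _ => ?_
        simp only [Equiv.prodCongr_apply, Prod.map, he]
    _ = ∑ x : (Bool × (Fin n → Bool)) × (Bool × (Fin n → Bool)),
          if (latticePos x.1.2 n + (if x.1.1 then 1 else 0) = r ∧
              latticePos x.2.2 n + (if x.2.1 then 1 else 0) = s ∧
              latticeInter x.1.2 x.2.2 +
                (if latticePos x.1.2 n = latticePos x.2.2 n then 1 else 0) = k)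
            then 1 else 0 := by
        refine Finset.sum_congr rfl fun x _ => ?_
        rw [latticePos_snoc_top, latticePos_snoc_top, latticeInter_snoc hn]
    _ = ∑ b : Bool, ∑ P : Fin n → Bool, ∑ c : Bool, ∑ Q : Fin n → Bool,
          (if (latticePos P n + (if b then 1 else 0) = r ∧
              latticePos Q n + (if c then 1 else 0) = s ∧
              latticeInter P Q +
                (if latticePos P n = latticePos Q n then 1 else 0) = k)
            then 1 else 0) := by
        simp only [Fintype.sum_prod_type]
    _ = ∑ b : Bool, ∑ c : Bool, ∑ P : Fin n → Bool, ∑ Q : Fin n → Bool,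
          (if (latticePos P n + (if b then 1 else 0) = r ∧
              latticePos Q n + (if c then 1 else 0) = s ∧
              latticeInter P Q +
                (if latticePos P n = latticePos Q n then 1 else 0) = k)
            then 1 else 0) := by
        exact Finset.sum_congr rfl fun b _ => Finset.sum_comm
    _ = _ := by
        refine Finset.sum_congr rfl fun b _ => Finset.sum_congr rfl fun c _ => ?_
        rw [Finset.card_filter, Fintype.sum_prod_type]

lemma core (n k a e : ℕ) :
    ((Finset.univ.filter (fun PQ : (Fin n → Bool) × (Fin n → Bool) =>
        latticePos PQ.1 n = a ∧ latticePos PQ.2 n = e ∧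
        latticeInter PQ.1 PQ.2 +
          (if latticePos PQ.1 n = latticePos PQ.2 n then 1 else 0) = k)).card : ℤ)
      = M n ((k : ℤ) - if (a : ℤ) = (e : ℤ) then 1 else 0) (a : ℤ) (e : ℤ) := by
  classical
  by_cases hae : a = e
  · subst hae
    rw [if_pos rfl]
    have hfeq : (Finset.univ.filter (fun PQ : (Fin n → Bool) × (Fin n → Bool) =>
        latticePos PQ.1 n = a ∧ latticePos PQ.2 n = a ∧
        latticeInter PQ.1 PQ.2 +
          (if latticePos PQ.1 n = latticePos PQ.2 n then 1 else 0) = k))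
        = (Finset.univ.filter (fun PQ : (Fin n → Bool) × (Fin n → Bool) =>
        latticePos PQ.1 n = a ∧ latticePos PQ.2 n = a ∧
        latticeInter PQ.1 PQ.2 + 1 = k)) := by
      refine Finset.filter_congr fun PQ _ => ?_
      constructor
      · rintro ⟨h1, h2, h3⟩
        rw [h1, h2, if_pos rfl] at h3
        exact ⟨h1, h2, h3⟩
      · rintro ⟨h1, h2, h3⟩
        refine ⟨h1, h2, ?_⟩
        rw [h1, h2, if_pos rfl]
        exact h3
    rw [hfeq]
    cases k with
    | zero =>
      have : (Finset.univ.filter (fun PQ : (Fin n → Bool) × (Fin n → Bool) =>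
          latticePos PQ.1 n = a ∧ latticePos PQ.2 n = a ∧
          latticeInter PQ.1 PQ.2 + 1 = 0)) = ∅ := by
        rw [Finset.filter_eq_empty_iff]; rintro PQ - ⟨-, -, h3⟩; omega
      rw [this, M, if_neg (by push_neg; intros; omega)]
      simp
    | succ k' =>
      have hfeq2 : (Finset.univ.filter (fun PQ : (Fin n → Bool) × (Fin n → Bool) =>
          latticePos PQ.1 n = a ∧ latticePos PQ.2 n = a ∧
          latticeInter PQ.1 PQ.2 + 1 = k' + 1))
          = (Finset.univ.filter (fun PQ : (Fin n → Bool) × (Fin n → Bool) =>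
          latticePos PQ.1 n = a ∧ latticePos PQ.2 n = a ∧
          latticeInter PQ.1 PQ.2 = k')) := by
        refine Finset.filter_congr fun PQ _ => ?_
        constructor
        · rintro ⟨h1, h2, h3⟩; exact ⟨h1, h2, by omega⟩
        · rintro ⟨h1, h2, h3⟩; exact ⟨h1, h2, by omega⟩
      rw [hfeq2, M, if_pos (by push_cast; omega)]
      rw [Int.toNat_natCast, Int.toNat_natCast,
        (by push_cast; omega : (((k' + 1 : ℕ) : ℤ) - 1).toNat = k'), ← Mnat]
  · have hae' : ¬ ((a : ℤ) = (e : ℤ)) := by exact_mod_cast hae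
    rw [if_neg hae']
    have hfeq : (Finset.univ.filter (fun PQ : (Fin n → Bool) × (Fin n → Bool) =>
        latticePos PQ.1 n = a ∧ latticePos PQ.2 n = e ∧
        latticeInter PQ.1 PQ.2 +
          (if latticePos PQ.1 n = latticePos PQ.2 n then 1 else 0) = k))
        = (Finset.univ.filter (fun PQ : (Fin n → Bool) × (Fin n → Bool) =>
        latticePos PQ.1 n = a ∧ latticePos PQ.2 n = e ∧
        latticeInter PQ.1 PQ.2 = k)) := by
      refine Finset.filter_congr fun PQ _ => ?_
      constructor
      · rintro ⟨h1, h2, h3⟩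
        rw [h1, h2, if_neg hae] at h3
        exact ⟨h1, h2, by omega⟩
      · rintro ⟨h1, h2, h3⟩
        refine ⟨h1, h2, ?_⟩
        rw [h1, h2, if_neg hae]
        omega
    rw [hfeq, sub_zero, M, if_pos (by push_cast; omega)]
    rw [Int.toNat_natCast, Int.toNat_natCast, Int.toNat_natCast, Int.toNat_natCast, ← Mnat]


lemma gval (n k r s : ℕ) (b c : Bool) :
    ((Finset.univ.filter (fun PQ : (Fin n → Bool) × (Fin n → Bool) =>
        latticePos PQ.1 n + (if b then 1 else 0) = r ∧
        latticePos PQ.2 n + (if c then 1 else 0) = s ∧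
        latticeInter PQ.1 PQ.2 +
          (if latticePos PQ.1 n = latticePos PQ.2 n then 1 else 0) = k)).card : ℤ)
      = M n ((k : ℤ) - if ((r : ℤ) - (if b then 1 else 0)) = ((s : ℤ) - (if c then 1 else 0))
              then 1 else 0)
          ((r : ℤ) - (if b then 1 else 0)) ((s : ℤ) - (if c then 1 else 0)) := by
  classical
  set bn : ℕ := if b then 1 else 0 with hbn
  set cn : ℕ := if c then 1 else 0 with hcn
  have hb1 : bn ≤ 1 := by rw [hbn]; split <;> omega
  have hc1 : cn ≤ 1 := by rw [hcn]; split <;> omega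
  have hbz : ((if b then (1:ℤ) else 0)) = (bn : ℤ) := by rw [hbn]; cases b <;> simp
  have hcz : ((if c then (1:ℤ) else 0)) = (cn : ℤ) := by rw [hcn]; cases c <;> simp
  rw [hbz, hcz]
  by_cases hbr : bn ≤ r
  · by_cases hcs : cn ≤ s
    · have har : (r : ℤ) - (bn : ℤ) = ((r - bn : ℕ) : ℤ) := by push_cast; omega
      have has : (s : ℤ) - (cn : ℤ) = ((s - cn : ℕ) : ℤ) := by push_cast; omega
      rw [har, has]
      have hiff : ∀ PQ : (Fin n → Bool) × (Fin n → Bool),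
          (latticePos PQ.1 n + bn = r ∧ latticePos PQ.2 n + cn = s ∧
            latticeInter PQ.1 PQ.2 +
              (if latticePos PQ.1 n = latticePos PQ.2 n then 1 else 0) = k) ↔
          (latticePos PQ.1 n = r - bn ∧ latticePos PQ.2 n = s - cn ∧
            latticeInter PQ.1 PQ.2 +
              (if latticePos PQ.1 n = latticePos PQ.2 n then 1 else 0) = k) := by
        rintro PQ
        constructor
        · rintro ⟨h1, h2, h3⟩; exact ⟨by omega, by omega, h3⟩
        · rintro ⟨h1, h2, h3⟩; exact ⟨by omega, by omega, h3⟩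
      rw [Finset.filter_congr (fun PQ _ => hiff PQ)]
      exact core n k (r - bn) (s - cn)
    · have hempty : (Finset.univ.filter (fun PQ : (Fin n → Bool) × (Fin n → Bool) =>
          latticePos PQ.1 n + bn = r ∧ latticePos PQ.2 n + cn = s ∧
          latticeInter PQ.1 PQ.2 +
            (if latticePos PQ.1 n = latticePos PQ.2 n then 1 else 0) = k)) = ∅ := by
        rw [Finset.filter_eq_empty_iff]; rintro PQ - ⟨-, h2, -⟩; omega
      rw [hempty, M, if_neg (by push_neg; intros; intros; omega)]
      simp
  · have hempty : (Finset.univ.filter (fun PQ : (Fin n → Bool) × (Fin n → Bool) =>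
        latticePos PQ.1 n + bn = r ∧ latticePos PQ.2 n + cn = s ∧
        latticeInter PQ.1 PQ.2 +
          (if latticePos PQ.1 n = latticePos PQ.2 n then 1 else 0) = k)) = ∅ := by
      rw [Finset.filter_eq_empty_iff]; rintro PQ - ⟨h1, -, -⟩; omega
    rw [hempty, M, if_neg (by push_neg; intros; omega)]
    simp

lemma M_zero_left {n k r s : ℤ} (h : r < 0 ∨ s < 0 ∨ k < 0) : M n k r s = 0 := by
  rw [M, if_neg (by push_neg; intros; omega)]

lemma M_zero_big {n k r s : ℤ} (hn : 0 ≤ n) (h : n < r ∨ n < s) : M n k r s = 0 := by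
  rw [M]
  split
  · next hcond =>
    rw [Mnat_eq_zero (by omega)]
    simp
  · rfl

lemma step (n k r s : ℤ) (hn : 2 ≤ n) (hk : 0 ≤ k) :
    M n k r s =
      M (n - 1) (k - if r = s then 1 else 0) r s +
      M (n - 1) (k - if r = s - 1 then 1 else 0) r (s - 1) +
      M (n - 1) (k - if r - 1 = s then 1 else 0) (r - 1) s +
      M (n - 1) (k - if r - 1 = s - 1 then 1 else 0) (r - 1) (s - 1) := by
  rcases lt_or_ge r 0 with hr | hr
  · rw [M_zero_left (Or.inl hr), M_zero_left (Or.inl hr), M_zero_left (Or.inl hr),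
      M_zero_left (Or.inl (by omega)), M_zero_left (Or.inl (by omega))]
    ring
  rcases lt_or_ge s 0 with hs | hs
  · rw [M_zero_left (Or.inr (Or.inl hs)), M_zero_left (Or.inr (Or.inl hs)),
      M_zero_left (Or.inr (Or.inl (by omega))), M_zero_left (Or.inr (Or.inl hs)),
      M_zero_left (Or.inr (Or.inl (by omega)))]
    ring
  obtain ⟨n', rfl⟩ : ∃ m : ℕ, n = (m : ℤ) := ⟨n.toNat, by omega⟩
  obtain ⟨k', rfl⟩ : ∃ m : ℕ, k = (m : ℤ) := ⟨k.toNat, by omega⟩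
  obtain ⟨r', rfl⟩ : ∃ m : ℕ, r = (m : ℤ) := ⟨r.toNat, by omega⟩
  obtain ⟨s', rfl⟩ : ∃ m : ℕ, s = (m : ℤ) := ⟨s.toNat, by omega⟩
  obtain ⟨n0, rfl⟩ : ∃ m : ℕ, n' = m + 1 := ⟨n' - 1, by omega⟩
  have hn0 : 1 ≤ n0 := by omega
  have hL : M ((n0 + 1 : ℕ) : ℤ) (k' : ℤ) (r' : ℤ) (s' : ℤ) = (Mnat (n0 + 1) k' r' s' : ℤ) := by
    rw [M, if_pos (by push_cast; omega), Int.toNat_natCast, Int.toNat_natCast,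
      Int.toNat_natCast, Int.toNat_natCast]
  rw [hL, master n0 hn0 k' r' s']
  rw [Fintype.sum_bool, Fintype.sum_bool, Fintype.sum_bool]
  rw [Nat.cast_add, Nat.cast_add, Nat.cast_add]
  rw [gval n0 k' r' s' true true, gval n0 k' r' s' true false,
    gval n0 k' r' s' false true, gval n0 k' r' s' false false,
    show ((n0 + 1 : ℕ) : ℤ) - 1 = (n0 : ℤ) from by push_cast; ring]
  norm_num
  ring

lemma devsum (m k p t : ℤ) (hm : 0 ≤ m) (hp : 0 ≤ p) (ht : m ≤ t) :
    ∑ r ∈ Finset.Icc (0:ℤ) t, M m (k - if r = p then 1 else 0) r (2 * p - r)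
      = (∑ r ∈ Finset.Icc (0:ℤ) t, M m k r (2 * p - r)) + (N m (k-1) p - N m k p) := by
  have hpt : ∀ r : ℤ, M m (k - if r = p then 1 else 0) r (2 * p - r)
      = M m k r (2 * p - r) + (if r = p then (N m (k-1) p - N m k p) else 0) := by
    intro r
    by_cases h : r = p
    · subst h
      rw [if_pos rfl, if_pos rfl, N, N, show 2 * r - r = r from by ring]
      ring_nf
    · rw [if_neg h, if_neg h, sub_zero, add_zero]
  rw [Finset.sum_congr rfl (fun r _ => hpt r), Finset.sum_add_distrib,
    Finset.sum_ite_eq' (Finset.Icc (0:ℤ) t) p (fun _ => N m (k-1) p - N m k p)]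
  by_cases hpmem : p ∈ Finset.Icc (0:ℤ) t
  · rw [if_pos hpmem]
  · rw [if_neg hpmem]
    have hptm : m < p := by
      rw [Finset.mem_Icc] at hpmem; omega
    rw [N, N, M_zero_big hm (Or.inl hptm), M_zero_big hm (Or.inl hptm)]
    ring

lemma icc_top (n : ℤ) (hn : 1 ≤ n) :
    Finset.Icc (0:ℤ) n = insert n (Finset.Icc 0 (n-1)) := by
  ext x; simp only [Finset.mem_Icc, Finset.mem_insert]; omega

lemma icc_bot (n : ℤ) (hn : 0 ≤ n) :
    Finset.Icc (-1:ℤ) n = insert (-1) (Finset.Icc 0 n) := by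
  ext x; simp only [Finset.mem_Icc, Finset.mem_insert]; omega

lemma shift_sum (n : ℤ) (f : ℤ → ℤ) :
    ∑ r ∈ Finset.Icc (0:ℤ) n, f (r - 1) = ∑ r ∈ Finset.Icc (-1:ℤ) (n-1), f r := by
  rw [show Finset.Icc (-1:ℤ) (n-1) = (Finset.Icc (0:ℤ) n).map (addRightEmbedding (-1)) from by
    rw [Finset.map_add_right_Icc, show (0:ℤ) + -1 = -1 from by ring,
      show n + -1 = n - 1 from by ring], Finset.sum_map]
  exact Finset.sum_congr rfl fun r _ => by rw [addRightEmbedding_apply]; ring_nf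


/-- The recurrence for `NO(n,k,p)`, where `N(n−1,−1,p) = 0` and `NO(n−1,k,−1) = 0`. -/
theorem NO_recurrence (n k p : ℤ) (hn : 2 ≤ n) (hk : 0 ≤ k) (hkn : k ≤ n - 2)
    (hp : 0 ≤ p) :
    NO n k p =
      NO (n - 1) k p + 2 * NE (n - 1) k p + 2 * N (n - 1) (k - 1) p -
        2 * N (n - 1) k p + NO (n - 1) k (p - 1) := by
  have hm : (0:ℤ) ≤ n - 1 := by omega
  have hpt : ∀ r : ℤ, M n k r (2 * p + 1 - r) =
      M (n-1) k r (2 * p + 1 - r) +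
      M (n-1) (k - if r = p then 1 else 0) r (2 * p - r) +
      M (n-1) (k - if r = p + 1 then 1 else 0) (r - 1) (2 * p + 1 - r) +
      M (n-1) k (r - 1) (2 * p - r) := by
    intro r
    rw [step n k r (2 * p + 1 - r) hn hk,
      show (2*p+1-r-1 : ℤ) = 2*p-r from by ring,
      if_neg (by omega : ¬(r = 2*p+1-r)), sub_zero,
      show (if r = 2*p-r then (1:ℤ) else 0) = (if r = p then 1 else 0) from by
        by_cases h : r = p
        · rw [if_pos (by omega), if_pos h]
        · rw [if_neg (by omega), if_neg h],
      show (if r-1 = 2*p+1-r then (1:ℤ) else 0) = (if r = p+1 then 1 else 0) from by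
        by_cases h : r = p+1
        · rw [if_pos (by omega), if_pos h]
        · rw [if_neg (by omega), if_neg h],
      if_neg (by omega : ¬(r-1 = 2*p-r)), sub_zero]
  rw [NO, Finset.sum_congr rfl (fun r _ => hpt r), Finset.sum_add_distrib,
    Finset.sum_add_distrib, Finset.sum_add_distrib]
  -- S1
  have hS1 : ∑ r ∈ Finset.Icc (0:ℤ) n, M (n-1) k r (2 * p + 1 - r) = NO (n-1) k p := by
    rw [icc_top n (by omega), Finset.sum_insert (by simp), NO,
      M_zero_big hm (Or.inl (by omega))]
    ring
  -- S2
  have hS2 : ∑ r ∈ Finset.Icc (0:ℤ) n, M (n-1) (k - if r = p then 1 else 0) r (2 * p - r)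
      = NE (n-1) k p + (N (n-1) (k-1) p - N (n-1) k p) := by
    rw [devsum (n-1) k p n hm hp (by omega)]
    congr 1
    rw [icc_top n (by omega), Finset.sum_insert (by simp), NE,
      M_zero_big hm (Or.inl (by omega))]
    ring
  -- S3
  have hS3 : ∑ r ∈ Finset.Icc (0:ℤ) n,
      M (n-1) (k - if r = p + 1 then 1 else 0) (r - 1) (2 * p + 1 - r)
      = NE (n-1) k p + (N (n-1) (k-1) p - N (n-1) k p) := by
    have hre : ∀ r : ℤ, M (n-1) (k - if r = p + 1 then 1 else 0) (r - 1) (2 * p + 1 - r)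
        = (fun x => M (n-1) (k - if x = p then 1 else 0) x (2 * p - x)) (r - 1) := by
      intro r
      simp only
      rw [show (if r = p + 1 then (1:ℤ) else 0) = (if r - 1 = p then 1 else 0) from by
        by_cases h : r = p + 1
        · rw [if_pos h, if_pos (by omega)]
        · rw [if_neg h, if_neg (by omega)],
        show 2*p+1-r = 2*p-(r-1) from by ring]
    rw [Finset.sum_congr rfl (fun r _ => hre r),
      shift_sum n (fun x => M (n-1) (k - if x = p then 1 else 0) x (2 * p - x)),
      icc_bot (n-1) hm, Finset.sum_insert (by simp)]
    simp only [M_zero_left (Or.inl (show (-1:ℤ) < 0 by norm_num)), zero_add]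
    rw [devsum (n-1) k p (n-1) hm hp le_rfl, ← NE]
  -- S4
  have hS4 : ∑ r ∈ Finset.Icc (0:ℤ) n, M (n-1) k (r - 1) (2 * p - r)
      = NO (n-1) k (p-1) := by
    have hre : ∀ r : ℤ, M (n-1) k (r - 1) (2 * p - r)
        = (fun x => M (n-1) k x (2 * (p-1) + 1 - x)) (r - 1) := by
      intro r
      simp only
      rw [show 2*p-r = 2*(p-1)+1-(r-1) from by ring]
    rw [Finset.sum_congr rfl (fun r _ => hre r),
      shift_sum n (fun x => M (n-1) k x (2 * (p-1) + 1 - x)),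
      icc_bot (n-1) hm, Finset.sum_insert (by simp)]
    simp only [M_zero_left (Or.inl (show (-1:ℤ) < 0 by norm_num)), zero_add]
    rw [← NO]
  rw [hS1, hS2, hS3, hS4]
  ring
end

section
/- For all integers j ≥ 1, n ≥ j and 0 ≤ r ≤ n−j, one has M(n,0,r,r+j) = Σ ∏_{i=1}^{j} M(n_i, 0, r_i, r_i+1), where the sum is over all j-tuples (n_1,…,n_j) of positive integers with n_1+⋯+n_j = n and all j-tuples (r_1,…,r_j) of nonnegative integers with r_1+⋯+r_j = r. -/
open Finset

lemma latticePos_zero {n : ℕ} (P : Fin n → Bool) : latticePos P 0 = 0 := by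
  simp [latticePos]

lemma latticePos_mono {n : ℕ} (P : Fin n → Bool) {s t : ℕ} (h : s ≤ t) :
    latticePos P s ≤ latticePos P t := by
  apply Finset.card_le_card
  intro i hi
  simp only [Finset.mem_filter] at hi ⊢
  exact ⟨hi.1, hi.2.1.trans_le h, hi.2.2⟩

lemma latticePos_succ_le {n : ℕ} (P : Fin n → Bool) (t : ℕ) :
    latticePos P (t + 1) ≤ latticePos P t + 1 := by
  unfold latticePos
  have hsub : (Finset.univ.filter (fun i : Fin n => (i : ℕ) < t + 1 ∧ P i = true)) ⊆
      (Finset.univ.filter (fun i : Fin n => (i : ℕ) < t ∧ P i = true)) ∪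
      (Finset.univ.filter (fun i : Fin n => (i : ℕ) = t)) := by
    intro i hi
    simp only [Finset.mem_filter, Finset.mem_union, Finset.mem_univ, true_and] at *
    rcases Nat.lt_or_ge (i : ℕ) t with h | h
    · exact Or.inl ⟨h, hi.2⟩
    · exact Or.inr (by omega)
  calc _ ≤ _ := Finset.card_le_card hsub
    _ ≤ _ + _ := Finset.card_union_le _ _
    _ ≤ _ + 1 := by
      gcongr
      apply Finset.card_le_one.mpr
      intro a ha b hb
      simp only [Finset.mem_filter] at ha hb
      exact Fin.ext (ha.2.trans hb.2.symm)

lemma latticePos_le_self {n : ℕ} (P : Fin n → Bool) (t : ℕ) : latticePos P t ≤ t := by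
  have : latticePos P t ≤ (Finset.range t).card := by
    unfold latticePos
    refine Finset.card_le_card_of_injOn (fun i : Fin n => (i : ℕ)) ?_ ?_
    · intro i hi
      simp only [Finset.mem_coe, Finset.mem_filter] at hi
      exact Finset.mem_range.mpr hi.2.1
    · intro a _ b _ h
      exact Fin.ext h
  simpa using this

lemma latticePos_stable {m : ℕ} (P : Fin m → Bool) {t : ℕ} (h : m ≤ t) :
    latticePos P t = latticePos P m := by
  unfold latticePos
  congr 1
  apply Finset.filter_congr
  intro i _
  simp [i.isLt, i.isLt.trans_le h]

lemma latticePos_append {a b : ℕ} (u : Fin a → Bool) (v : Fin b → Bool) (t : ℕ) :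
    latticePos (Fin.append u v) t = latticePos u t + latticePos v (t - a) := by
  unfold latticePos
  rw [Finset.card_filter, Finset.card_filter, Finset.card_filter, Fin.sum_univ_add]
  congr 1
  · refine Finset.sum_congr rfl fun i _ => ?_
    simp
  · refine Finset.sum_congr rfl fun i _ => ?_
    have h : a + (i : ℕ) < t ↔ (i : ℕ) < t - a := by omega
    simp [h]

lemma latticePos_lt_of_ne {n : ℕ} {P Q : Fin n → Bool}
    (hne : ∀ t, 0 < t → t < n → latticePos P t ≠ latticePos Q t)
    (hend : latticePos P n < latticePos Q n) :
    ∀ t, 0 < t → t ≤ n → latticePos P t < latticePos Q t := by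
  have H : ∀ d t, t + d = n → 0 < t → latticePos P t < latticePos Q t := by
    intro d
    induction d with
    | zero =>
      intro t ht _
      obtain rfl : t = n := by omega
      exact hend
    | succ d ih =>
      intro t ht h0
      have h1 := ih (t + 1) (by omega) (by omega)
      have h2 := latticePos_succ_le Q t
      have h3 := latticePos_mono P (by omega : t ≤ t + 1)
      have h4 := hne t h0 (by omega)
      omega
  intro t h0 hle
  exact H (n - t) t (by omega) h0

lemma latticeInter_eq_zero_iff {n : ℕ} (P Q : Fin n → Bool) :
    latticeInter P Q = 0 ↔ ∀ t, 0 < t → t < n → latticePos P t ≠ latticePos Q t := by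
  unfold latticeInter
  rw [Finset.card_eq_zero, Finset.filter_eq_empty_iff]
  constructor
  · intro h t h0 h1 heq
    exact h (Finset.mem_Ioo.mpr ⟨h0, h1⟩) heq
  · intro h t ht heq
    exact h t (Finset.mem_Ioo.mp ht).1 (Finset.mem_Ioo.mp ht).2 heq

lemma Mnat_eq_zero_of_lt {n k r s : ℕ} (h : n < s) : Mnat n k r s = 0 := by
  unfold Mnat
  rw [Finset.card_eq_zero, Finset.filter_eq_empty_iff]
  rintro PQ - ⟨h1, h2, h3⟩
  have := latticePos_le_self PQ.2 n
  omega

lemma append_split {a b : ℕ} (P : Fin (a + b) → Bool) :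
    Fin.append (fun i => P (Fin.castAdd b i)) (fun i => P (Fin.natAdd a i)) = P := by
  funext i
  cases i using Fin.addCases with
  | left i => rw [Fin.append_left]
  | right i => rw [Fin.append_right]

lemma fiber_card (m b r1 r2 j : ℕ) (hj : 1 ≤ j) :
    (Finset.univ.filter (fun PQ : (Fin (m + b) → Bool) × (Fin (m + b) → Bool) =>
      latticePos PQ.1 (m + b) = r1 + r2 ∧
      latticePos PQ.2 (m + b) = r1 + r2 + (j + 1) ∧
      (∀ t ∈ Finset.Ioo 0 (m + b), latticePos PQ.1 t ≠ latticePos PQ.2 t) ∧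
      latticePos PQ.1 m = r1 ∧ latticePos PQ.2 m = r1 + 1 ∧
      (∀ t ∈ Finset.Ioo m (m + b), latticePos PQ.2 t ≠ latticePos PQ.1 t + 1))).card
    = Mnat m 0 r1 (r1 + 1) * Mnat b 0 r2 (r2 + j) := by
  unfold Mnat
  rw [← Finset.card_product]
  apply Finset.card_nbij'
    (i := fun PQ => (((fun i => PQ.1 (Fin.castAdd b i)), (fun i => PQ.2 (Fin.castAdd b i))),
                     ((fun i => PQ.1 (Fin.natAdd m i)), (fun i => PQ.2 (Fin.natAdd m i)))))
    (j := fun X => (Fin.append X.1.1 X.2.1, Fin.append X.1.2 X.2.2))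
  · -- forward membership: splits of a fiber element land in the product
    intro PQ hPQ
    simp only [Finset.mem_coe, Finset.mem_filter, Finset.mem_univ, true_and, Finset.mem_Ioo,
      Finset.mem_product, latticeInter_eq_zero_iff] at hPQ ⊢
    obtain ⟨e1, e2, hni, f1, f2, hlast⟩ := hPQ
    have k1 : ∀ t, latticePos PQ.1 t
        = latticePos (fun i => PQ.1 (Fin.castAdd b i)) t
          + latticePos (fun i => PQ.1 (Fin.natAdd m i)) (t - m) := by
      intro t; conv_lhs => rw [← append_split PQ.1]
      rw [latticePos_append]
    have k2 : ∀ t, latticePos PQ.2 t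
        = latticePos (fun i => PQ.2 (Fin.castAdd b i)) t
          + latticePos (fun i => PQ.2 (Fin.natAdd m i)) (t - m) := by
      intro t; conv_lhs => rw [← append_split PQ.2]
      rw [latticePos_append]
    have km1 := k1 m
    have km2 := k2 m
    rw [Nat.sub_self, latticePos_zero] at km1 km2
    have kn1 := k1 (m + b)
    have kn2 := k2 (m + b)
    rw [show m + b - m = b by omega,
      latticePos_stable (fun i => PQ.1 (Fin.castAdd b i)) (by omega : m ≤ m + b)] at kn1
    rw [show m + b - m = b by omega,
      latticePos_stable (fun i => PQ.2 (Fin.castAdd b i)) (by omega : m ≤ m + b)] at kn2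
    refine ⟨⟨by omega, by omega, ?_⟩, by omega, by omega, ?_⟩
    · intro t h0 ht heq
      have e1t := k1 t
      have e2t := k2 t
      rw [show t - m = 0 by omega, latticePos_zero] at e1t e2t
      exact hni t ⟨h0, by omega⟩ (by omega)
    · intro t h0 ht heq
      have e1t := k1 (m + t)
      have e2t := k2 (m + t)
      rw [show m + t - m = t by omega,
        latticePos_stable (fun i => PQ.1 (Fin.castAdd b i)) (by omega : m ≤ m + t)] at e1t
      rw [show m + t - m = t by omega,
        latticePos_stable (fun i => PQ.2 (Fin.castAdd b i)) (by omega : m ≤ m + t)] at e2t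
      exact hlast (m + t) ⟨by omega, by omega⟩ (by omega)
  · -- backward membership: appending elements of the product lands in the fiber
    intro X hX
    simp only [Finset.mem_coe, Finset.mem_filter, Finset.mem_univ, true_and, Finset.mem_Ioo,
      Finset.mem_product, latticeInter_eq_zero_iff] at hX ⊢
    obtain ⟨⟨u1, u2, hu⟩, v1, v2, hv⟩ := hX
    have k1 : ∀ t, latticePos (Fin.append X.1.1 X.2.1) t
        = latticePos X.1.1 t + latticePos X.2.1 (t - m) := fun t => latticePos_append _ _ t
    have k2 : ∀ t, latticePos (Fin.append X.1.2 X.2.2) t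
        = latticePos X.1.2 t + latticePos X.2.2 (t - m) := fun t => latticePos_append _ _ t
    have hIVT := latticePos_lt_of_ne (P := X.2.1) (Q := X.2.2) hv (by omega)
    have km1 := k1 m
    have km2 := k2 m
    rw [Nat.sub_self, latticePos_zero] at km1 km2
    have kn1 := k1 (m + b)
    have kn2 := k2 (m + b)
    rw [show m + b - m = b by omega, latticePos_stable X.1.1 (by omega : m ≤ m + b)] at kn1
    rw [show m + b - m = b by omega, latticePos_stable X.1.2 (by omega : m ≤ m + b)] at kn2
    refine ⟨by omega, by omega, ?_, by omega, by omega, ?_⟩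
    · rintro t ⟨h0, ht⟩ heq
      rcases Nat.lt_or_ge t m with h | h
      · have e1t := k1 t
        have e2t := k2 t
        rw [show t - m = 0 by omega, latticePos_zero] at e1t e2t
        exact hu t h0 h (by omega)
      · rcases Nat.eq_or_lt_of_le h with rfl | h'
        · omega
        · have e1t := k1 t
          have e2t := k2 t
          rw [latticePos_stable X.1.1 h] at e1t
          rw [latticePos_stable X.1.2 h] at e2t
          have := hIVT (t - m) (by omega) (by omega)
          omega
    · rintro t ⟨hm, ht⟩ heq
      have e1t := k1 t
      have e2t := k2 t
      rw [latticePos_stable X.1.1 (by omega : m ≤ t)] at e1t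
      rw [latticePos_stable X.1.2 (by omega : m ≤ t)] at e2t
      have := hIVT (t - m) (by omega) (by omega)
      omega
  · intro PQ _
    exact Prod.ext (append_split PQ.1) (append_split PQ.2)
  · intro X _
    refine Prod.ext (Prod.ext ?_ ?_) (Prod.ext ?_ ?_) <;> funext i <;>
      simp [Fin.append_left, Fin.append_right]

/-- The last time the two paths are at horizontal distance one. -/
def cutOf {n : ℕ} (PQ : (Fin n → Bool) × (Fin n → Bool)) : ℕ :=
  ((Finset.Ioo 0 n).filter (fun t => latticePos PQ.2 t = latticePos PQ.1 t + 1)).sup id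

lemma step_s12 (n r j : ℕ) (hj : 1 ≤ j) :
    Mnat n 0 r (r + (j + 1)) =
      ∑ m ∈ Finset.Ioo 0 n, ∑ r1 ∈ Finset.range (r + 1),
        Mnat m 0 r1 (r1 + 1) * Mnat (n - m) 0 (r - r1) ((r - r1) + j) := by
  have hA : ∀ PQ : (Fin n → Bool) × (Fin n → Bool),
      latticePos PQ.1 n = r → latticePos PQ.2 n = r + (j + 1) →
      (∀ t, 0 < t → t < n → latticePos PQ.1 t ≠ latticePos PQ.2 t) →
      cutOf PQ ∈ ((Finset.Ioo 0 n).filter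
        (fun t => latticePos PQ.2 t = latticePos PQ.1 t + 1)) := by
    intro PQ h1 h2 hni
    have hn2 : 2 ≤ n := by
      have := latticePos_le_self PQ.2 n
      omega
    have hone : (1 : ℕ) ∈ ((Finset.Ioo 0 n).filter
        (fun t => latticePos PQ.2 t = latticePos PQ.1 t + 1)) := by
      have hIVT := latticePos_lt_of_ne hni (by omega) 1 (by omega) (by omega)
      have := latticePos_le_self PQ.2 1
      rw [Finset.mem_filter, Finset.mem_Ioo]
      exact ⟨⟨by omega, by omega⟩, by omega⟩
    obtain ⟨c, hc, he⟩ := Finset.exists_mem_eq_sup _ ⟨1, hone⟩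
      (id : ℕ → ℕ)
    rw [cutOf, he]
    exact hc
  conv_lhs => rw [Mnat]
  rw [Finset.card_eq_sum_card_fiberwise
    (f := fun PQ => (cutOf PQ, latticePos PQ.1 (cutOf PQ)))
    (t := Finset.Ioo 0 n ×ˢ Finset.range (r + 1)) ?hmap]
  case hmap =>
    intro PQ hPQ
    simp only [Finset.mem_coe, Finset.mem_filter, Finset.mem_univ, true_and] at hPQ
    obtain ⟨h1, h2, h3⟩ := hPQ
    have := hA PQ h1 h2 ((latticeInter_eq_zero_iff _ _).mp h3)
    rw [Finset.mem_filter, Finset.mem_Ioo] at this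
    simp only [Finset.mem_coe, Finset.mem_product, Finset.mem_Ioo, Finset.mem_range]
    refine ⟨⟨this.1.1, this.1.2⟩, ?_⟩
    have h4 : latticePos PQ.1 (cutOf PQ) ≤ latticePos PQ.1 n :=
      latticePos_mono _ (by omega)
    omega
  rw [Finset.sum_product]
  refine Finset.sum_congr rfl fun m hm => Finset.sum_congr rfl fun r1 hr1 => ?_
  rw [Finset.mem_Ioo] at hm
  rw [Finset.mem_range] at hr1
  rw [Finset.filter_filter]
  have hiff : ∀ PQ : (Fin n → Bool) × (Fin n → Bool),
      ((latticePos PQ.1 n = r ∧ latticePos PQ.2 n = r + (j + 1) ∧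
          latticeInter PQ.1 PQ.2 = 0) ∧
        (cutOf PQ, latticePos PQ.1 (cutOf PQ)) = (m, r1))
      ↔ (latticePos PQ.1 n = r ∧
          latticePos PQ.2 n = r + (j + 1) ∧
          (∀ t ∈ Finset.Ioo 0 n, latticePos PQ.1 t ≠ latticePos PQ.2 t) ∧
          latticePos PQ.1 m = r1 ∧ latticePos PQ.2 m = r1 + 1 ∧
          (∀ t ∈ Finset.Ioo m n, latticePos PQ.2 t ≠ latticePos PQ.1 t + 1)) := by
    intro PQ
    constructor
    · rintro ⟨⟨h1, h2, h3⟩, hφ⟩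
      rw [Prod.mk.injEq] at hφ
      obtain ⟨hc, hr⟩ := hφ
      have h3' := (latticeInter_eq_zero_iff _ _).mp h3
      have hmem := hA PQ h1 h2 h3'
      rw [hc, Finset.mem_filter, Finset.mem_Ioo] at hmem
      rw [hc] at hr
      refine ⟨h1, h2, ?_, hr, by omega, ?_⟩
      · intro t htm
        rw [Finset.mem_Ioo] at htm
        exact h3' t htm.1 htm.2
      · intro t htm heq
        rw [Finset.mem_Ioo] at htm
        have htA : t ∈ ((Finset.Ioo 0 n).filter
            (fun t => latticePos PQ.2 t = latticePos PQ.1 t + 1)) := by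
          rw [Finset.mem_filter, Finset.mem_Ioo]
          exact ⟨⟨by omega, htm.2⟩, heq⟩
        have := Finset.le_sup (f := (id : ℕ → ℕ)) htA
        rw [← cutOf, hc] at this
        simp only [id_eq] at this
        omega
    · rintro ⟨h1, h2, h3, h4, h5, h6⟩
      have h3' : ∀ t, 0 < t → t < n → latticePos PQ.1 t ≠ latticePos PQ.2 t :=
        fun t a b => h3 t (Finset.mem_Ioo.mpr ⟨a, b⟩)
      have hmA : m ∈ ((Finset.Ioo 0 n).filter
          (fun t => latticePos PQ.2 t = latticePos PQ.1 t + 1)) := by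
        rw [Finset.mem_filter, Finset.mem_Ioo]
        exact ⟨⟨hm.1, hm.2⟩, by omega⟩
      have hcut : cutOf PQ = m := by
        apply le_antisymm
        · apply Finset.sup_le
          intro t htA
          rw [Finset.mem_filter, Finset.mem_Ioo] at htA
          simp only [id_eq]
          by_contra hlt
          exact h6 t (Finset.mem_Ioo.mpr ⟨by omega, htA.1.2⟩) htA.2
        · exact Finset.le_sup (f := (id : ℕ → ℕ)) hmA
      exact ⟨⟨h1, h2, (latticeInter_eq_zero_iff _ _).mpr h3'⟩,
        by rw [Prod.mk.injEq, hcut]; exact ⟨rfl, h4⟩⟩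
  rw [Finset.filter_congr (fun PQ _ => hiff PQ)]
  obtain ⟨b, rfl⟩ : ∃ b, n = m + b := ⟨n - m, by omega⟩
  rw [show m + b - m = b by omega]
  have F := fiber_card m b r1 (r - r1) j hj
  rw [show r1 + (r - r1) = r by omega] at F
  exact F

lemma sum_adT_succ {β : Type*} [AddCommMonoid β] (j r : ℕ) (f : (Fin (j + 1) → ℕ) → β) :
    ∑ d ∈ Finset.Nat.antidiagonalTuple (j + 1) r, f d
      = ∑ r1 ∈ Finset.range (r + 1), ∑ d' ∈ Finset.Nat.antidiagonalTuple j (r - r1),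
          f (Fin.cons r1 d') := by
  have h := Finset.sum_sigma (Finset.range (r + 1))
    (fun r1 => Finset.Nat.antidiagonalTuple j (r - r1))
    (fun p : Σ _ : ℕ, (Fin j → ℕ) => f (Fin.cons p.1 p.2))
  refine Eq.trans ?_ h
  apply Finset.sum_nbij' (i := fun d => (⟨d 0, Fin.tail d⟩ : Σ _ : ℕ, (Fin j → ℕ)))
    (j := fun p => Fin.cons p.1 p.2)
  · intro d hd
    rw [Finset.Nat.mem_antidiagonalTuple] at hd
    rw [Fin.sum_univ_succ] at hd
    rw [Finset.mem_sigma, Finset.mem_range, Finset.Nat.mem_antidiagonalTuple]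
    constructor
    · show d 0 < r + 1
      omega
    · show (∑ i : Fin j, d i.succ) = r - d 0
      omega
  · intro p hp
    rw [Finset.mem_sigma, Finset.mem_range, Finset.Nat.mem_antidiagonalTuple] at hp
    rw [Finset.Nat.mem_antidiagonalTuple, Fin.sum_cons]
    omega
  · intro d _
    exact Fin.cons_self_tail d
  · intro p hp
    obtain ⟨p1, p2⟩ := p
    simp
  · intro d _
    rw [Fin.cons_self_tail]

lemma sum_adT_pos_succ {β : Type*} [AddCommMonoid β] (j n : ℕ) (f : (Fin (j + 1) → ℕ) → β) :
    ∑ c ∈ (Finset.Nat.antidiagonalTuple (j + 1) n).filter (fun c => ∀ i, 0 < c i), f c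
      = ∑ m ∈ Finset.Ioo 0 (n + 1),
          ∑ c' ∈ (Finset.Nat.antidiagonalTuple j (n - m)).filter (fun c => ∀ i, 0 < c i),
          f (Fin.cons m c') := by
  have h := Finset.sum_sigma (Finset.Ioo 0 (n + 1))
    (fun m => (Finset.Nat.antidiagonalTuple j (n - m)).filter (fun c => ∀ i, 0 < c i))
    (fun p : Σ _ : ℕ, (Fin j → ℕ) => f (Fin.cons p.1 p.2))
  refine Eq.trans ?_ h
  apply Finset.sum_nbij' (i := fun c => (⟨c 0, Fin.tail c⟩ : Σ _ : ℕ, (Fin j → ℕ)))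
    (j := fun p => Fin.cons p.1 p.2)
  · intro c hc
    rw [Finset.mem_filter, Finset.Nat.mem_antidiagonalTuple] at hc
    obtain ⟨hsum, hpos⟩ := hc
    rw [Fin.sum_univ_succ] at hsum
    rw [Finset.mem_sigma, Finset.mem_Ioo, Finset.mem_filter,
      Finset.Nat.mem_antidiagonalTuple]
    refine ⟨⟨hpos 0, show c 0 < n + 1 by omega⟩, ?_, fun i => hpos i.succ⟩
    show (∑ i : Fin j, c i.succ) = n - c 0
    omega
  · intro p hp
    rw [Finset.mem_sigma, Finset.mem_Ioo, Finset.mem_filter,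
      Finset.Nat.mem_antidiagonalTuple] at hp
    obtain ⟨⟨hp0, hpn⟩, hsum, hpos⟩ := hp
    rw [Finset.mem_filter, Finset.Nat.mem_antidiagonalTuple, Fin.sum_cons]
    constructor
    · omega
    · intro i
      cases i using Fin.cases with
      | zero => simpa using hp0
      | succ i => simpa using hpos i
  · intro c _
    exact Fin.cons_self_tail c
  · intro p hp
    obtain ⟨p1, p2⟩ := p
    simp
  · intro c _
    rw [Fin.cons_self_tail]

lemma key (j : ℕ) (hj : 1 ≤ j) : ∀ n r : ℕ,
    Mnat n 0 r (r + j) =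
      ∑ c ∈ (Finset.Nat.antidiagonalTuple j n).filter (fun c => ∀ i, 0 < c i),
        ∑ d ∈ Finset.Nat.antidiagonalTuple j r,
          ∏ i : Fin j, Mnat (c i) 0 (d i) (d i + 1) := by
  induction j, hj using Nat.le_induction with
  | base =>
    intro n r
    rcases Nat.eq_zero_or_pos n with rfl | hn
    · rw [Mnat_eq_zero_of_lt (by omega)]
      rw [Finset.Nat.antidiagonalTuple_one, Finset.filter_singleton, if_neg, Finset.sum_empty]
      intro h
      simpa using h 0
    · rw [Finset.Nat.antidiagonalTuple_one, Finset.filter_singleton, if_pos,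
        Finset.sum_singleton, Finset.Nat.antidiagonalTuple_one, Finset.sum_singleton,
        Fin.prod_univ_one]
      · simp
      · intro i
        have : i = 0 := Subsingleton.elim i 0
        subst this
        simpa using hn
  | succ j hj ih =>
    intro n r
    rcases Nat.eq_zero_or_pos n with rfl | hn
    · rw [Mnat_eq_zero_of_lt (by omega)]
      rw [Finset.Nat.antidiagonalTuple_zero_right, Finset.filter_singleton, if_neg,
        Finset.sum_empty]
      intro h
      simpa using h 0
    · have hIoo : Finset.Ioo 0 (n + 1) = insert n (Finset.Ioo 0 n) := by
        ext x
        simp only [Finset.mem_Ioo, Finset.mem_insert]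
        omega
      rw [step_s12 n r j hj, sum_adT_pos_succ]
      have hz : (∑ c' ∈ (Finset.Nat.antidiagonalTuple j (n - n)).filter (fun c => ∀ i, 0 < c i),
          ∑ d ∈ Finset.Nat.antidiagonalTuple (j + 1) r,
            ∏ i : Fin (j + 1), Mnat ((Fin.cons n c' : Fin (j+1) → ℕ) i) 0 (d i) (d i + 1)) = 0 := by
        rw [Nat.sub_self, Finset.Nat.antidiagonalTuple_zero_right, Finset.filter_singleton,
          if_neg, Finset.sum_empty]
        intro h
        have := h ⟨0, by omega⟩
        simp at this
      rw [hIoo, Finset.sum_insert (by simp), hz, zero_add]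
      refine Finset.sum_congr rfl fun m hm => ?_
      have inner : ∀ (c' : Fin j → ℕ),
          (∑ d ∈ Finset.Nat.antidiagonalTuple (j + 1) r,
              ∏ i : Fin (j + 1), Mnat ((Fin.cons m c' : Fin (j+1) → ℕ) i) 0 (d i) (d i + 1))
          = ∑ r1 ∈ Finset.range (r + 1), Mnat m 0 r1 (r1 + 1) *
              (∑ d' ∈ Finset.Nat.antidiagonalTuple j (r - r1),
                ∏ i : Fin j, Mnat (c' i) 0 (d' i) (d' i + 1)) := by
        intro c'
        rw [sum_adT_succ j r _]
        refine Finset.sum_congr rfl fun r1 _ => ?_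
        rw [Finset.mul_sum]
        refine Finset.sum_congr rfl fun d' _ => ?_
        rw [Fin.prod_univ_succ]
        simp only [Fin.cons_zero, Fin.cons_succ]
      rw [Finset.sum_congr rfl (fun c' _ => inner c')]
      rw [Finset.sum_comm]
      refine Finset.sum_congr rfl fun r1 _ => ?_
      rw [← Finset.mul_sum]
      congr 1
      exact ih (n - m) (r - r1)

lemma M_natCast (n r s : ℕ) : M (n : ℤ) 0 (r : ℤ) (s : ℤ) = (Mnat n 0 r s : ℤ) := by
  simp [M]

/-- Decomposition of pairs of nonintersecting paths:
`M(n,0,r,r+j) = Σ ∏_{i=1}^{j} M(nᵢ,0,rᵢ,rᵢ+1)` over compositions `n₁+⋯+n_j = n`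
into positive parts and `r₁+⋯+r_j = r` into nonnegative parts. -/
theorem M_decomposition_nonintersecting (j n r : ℕ) (hj : 1 ≤ j) (hn : j ≤ n)
    (hr : r ≤ n - j) :
    M n 0 r (r + j) =
      ∑ c ∈ (Finset.Nat.antidiagonalTuple j n).filter (fun c => ∀ i, 0 < c i),
        ∑ d ∈ Finset.Nat.antidiagonalTuple j r,
          ∏ i : Fin j, M (c i) 0 (d i) (d i + 1) := by
  rw [show ((r : ℤ) + (j : ℤ)) = ((r + j : ℕ) : ℤ) by push_cast; ring]
  rw [M_natCast n r (r + j), key j hj n r]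
  push_cast
  refine Finset.sum_congr rfl fun c _ => Finset.sum_congr rfl fun d _ =>
    Finset.prod_congr rfl fun i _ => ?_
  rw [show ((d i : ℤ) + 1) = ((d i + 1 : ℕ) : ℤ) by push_cast; ring]
  exact (M_natCast (c i) (d i) (d i + 1)).symm
end
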